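/- Let r be a real number with 0 ≤ r ≤ 1/2. Define f(x,y) = x·y/(x + y) for x + y > 0 and f(0,0) = 0. Then the infimum of 4 − α − β − γ − δ over all (α, β, γ, δ) ∈ [0,1]⁴ satisfying f(α, β) + f(γ, δ) ≤ r equals 2 − r/(1 − r). -/

import Mathlib

/-- `f x y = xy/(x+y)` for `x + y > 0`, and `f 0 0 = 0`. -/
noncomputable def cutRate (x y : ℝ) : ℝ := if 0 < x + y then x * y / (x + y) else 0

lemma cutRate_nonneg {x y : ℝ} (hx : 0 ≤ x) (hy : 0 ≤ y) : 0 ≤ cutRate x y := by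
  unfold cutRate
  split
  · positivity
  · exact le_refl 0

/-- key per-cut bound: (x+y)(1 - f(x,y)) ≤ 1 on [0,1]². -/
lemma cut_bound {x y : ℝ} (hx : x ∈ Set.Icc (0:ℝ) 1) (hy : y ∈ Set.Icc (0:ℝ) 1) :
    (x + y) * (1 - cutRate x y) ≤ 1 := by
  obtain ⟨hx0, hx1⟩ := hx
  obtain ⟨hy0, hy1⟩ := hy
  by_cases h : 0 < x + y
  · rw [cutRate, if_pos h]
    have heq : (x + y) * (1 - x * y / (x + y)) = x + y - x * y := by
      field_simp
    rw [heq]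
    nlinarith [mul_nonneg (sub_nonneg.2 hx1) (sub_nonneg.2 hy1)]
  · push_neg at h
    have hx : x = 0 := le_antisymm (by linarith) hx0
    have hy : y = 0 := le_antisymm (by linarith) hy0
    simp [cutRate, hx, hy]

/-- scalar inequality -/
lemma scalar_ineq {r s t : ℝ} (hs : 0 ≤ s) (ht : 0 ≤ t) (hst : s + t ≤ r)
    (hr : r ≤ 1/2) : 1/(1-s) + 1/(1-t) ≤ 1 + 1/(1-r) := by
  have hds : (0:ℝ) < 1 - s := by linarith
  have hdt : (0:ℝ) < 1 - t := by linarith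
  have hdr : (0:ℝ) < 1 - r := by linarith
  rw [div_add_div _ _ hds.ne' hdt.ne', div_le_iff₀ (by positivity)]
  have h1 : 1 + 1/(1-r) = (2-r)/(1-r) := by field_simp; ring
  rw [h1]
  rw [div_mul_eq_mul_div, le_div_iff₀ hdr]
  nlinarith [mul_nonneg hs ht, mul_nonneg (mul_nonneg hs ht) (sub_nonneg.2 (by linarith : s + t ≤ 1)), sq_nonneg (s - t)]

theorem global_csi_parallel_relay (r : ℝ) (hr0 : 0 ≤ r) (hr : r ≤ 1/2) :
    sInf {d : ℝ | ∃ α β γ δ : ℝ,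
        α ∈ Set.Icc (0:ℝ) 1 ∧ β ∈ Set.Icc (0:ℝ) 1 ∧
        γ ∈ Set.Icc (0:ℝ) 1 ∧ δ ∈ Set.Icc (0:ℝ) 1 ∧
        cutRate α β + cutRate γ δ ≤ r ∧
        d = 4 - α - β - γ - δ} = 2 - r / (1 - r) := by
  have hdr : (0:ℝ) < 1 - r := by linarith
  -- lower bound
  have hlb : ∀ d ∈ {d : ℝ | ∃ α β γ δ : ℝ,
        α ∈ Set.Icc (0:ℝ) 1 ∧ β ∈ Set.Icc (0:ℝ) 1 ∧
        γ ∈ Set.Icc (0:ℝ) 1 ∧ δ ∈ Set.Icc (0:ℝ) 1 ∧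
        cutRate α β + cutRate γ δ ≤ r ∧
        d = 4 - α - β - γ - δ}, 2 - r / (1 - r) ≤ d := by
    rintro d ⟨α, β, γ, δ, hα, hβ, hγ, hδ, hcut, rfl⟩
    set s := cutRate α β with hsdef
    set t := cutRate γ δ with htdef
    have hs0 : 0 ≤ s := cutRate_nonneg hα.1 hβ.1
    have ht0 : 0 ≤ t := cutRate_nonneg hγ.1 hδ.1
    have hs : s ≤ r := by linarith
    have ht : t ≤ r := by linarith
    have hds : (0:ℝ) < 1 - s := by linarith
    have hdt : (0:ℝ) < 1 - t := by linarith
    have h1 : α + β ≤ 1/(1-s) := by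
      rw [le_div_iff₀ hds]; exact cut_bound hα hβ
    have h2 : γ + δ ≤ 1/(1-t) := by
      rw [le_div_iff₀ hdt]; exact cut_bound hγ hδ
    have h3 : 1/(1-s) + 1/(1-t) ≤ 1 + 1/(1-r) := scalar_ineq hs0 ht0 hcut hr
    have h4 : r / (1-r) = 1/(1-r) - 1 := by field_simp; ring
    linarith
  -- witness
  have hwit : (2 - r / (1 - r)) ∈ {d : ℝ | ∃ α β γ δ : ℝ,
        α ∈ Set.Icc (0:ℝ) 1 ∧ β ∈ Set.Icc (0:ℝ) 1 ∧
        γ ∈ Set.Icc (0:ℝ) 1 ∧ δ ∈ Set.Icc (0:ℝ) 1 ∧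
        cutRate α β + cutRate γ δ ≤ r ∧
        d = 4 - α - β - γ - δ} := by
    refine ⟨1, r/(1-r), 1, 0, ?_, ?_, ?_, ?_, ?_, ?_⟩
    · exact ⟨zero_le_one, le_refl 1⟩
    · constructor
      · positivity
      · rw [div_le_one hdr]; linarith
    · exact ⟨zero_le_one, le_refl 1⟩
    · exact ⟨le_refl 0, zero_le_one⟩
    · have hpos : (0:ℝ) < 1 + r/(1-r) := by positivity
      have h1 : cutRate 1 (r/(1-r)) = r := by
        unfold cutRate
        rw [if_pos hpos]
        field_simp
        ring
      have h2 : cutRate 1 0 = 0 := by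
        unfold cutRate
        norm_num
      rw [h1, h2]; linarith
    · ring
  exact le_antisymm (csInf_le ⟨2 - r/(1-r), hlb⟩ hwit) (le_csInf ⟨_, hwit⟩ hlb)
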